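/- Let V be a finite set with |V| = n ≥ 1, let R ⊆ V × V be a directed graph on V, and let s, t ∈ V. Define the simple (undirected) layered graph G' on vertex set V × {0,1,…,n−1} in which two vertices are adjacent if and only if, writing them as (x,i) and (y,i+1) with consecutive layer indices, either x = y or (x,y) ∈ R. Then t is reachable from s in the directed graph R (i.e., (s,t) is in the reflexive-transitive closure of R) if and only if G' contains a walk of length exactly n − 1 from (s,0) to (t,n−1). -/

import Mathlib

section Aux

variable {V : Type} [Fintype V]

private abbrev layG (n : ℕ) (R : V → V → Prop) : SimpleGraph (V × Fin n) :=
  SimpleGraph.fromRel (fun x y : V × Fin n =>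
    (x.2 : ℕ) + 1 = (y.2 : ℕ) ∧ (x.1 = y.1 ∨ R x.1 y.1))

private lemma walk_bound {n : ℕ} {R : V → V → Prop} {a b : V × Fin n}
    (p : (layG n R).Walk a b) :
    ((b.2 : ℕ) : ℤ) - ((a.2 : ℕ) : ℤ) ≤ p.length ∧
      ((a.2 : ℕ) : ℤ) - ((b.2 : ℕ) : ℤ) ≤ p.length := by
  induction p with
  | nil => simp
  | cons h q ih =>
    rw [SimpleGraph.fromRel_adj] at h
    obtain ⟨-, h | h⟩ := h <;>
    · obtain ⟨h1, -⟩ := h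
      simp only [SimpleGraph.Walk.length_cons]
      push_cast
      omega

private lemma walk_reach {n : ℕ} {R : V → V → Prop} {a b : V × Fin n}
    (p : (layG n R).Walk a b) (hl : (b.2 : ℕ) = (a.2 : ℕ) + p.length) :
    Relation.ReflTransGen R a.1 b.1 := by
  induction p with
  | nil => exact Relation.ReflTransGen.refl
  | @cons u c b h q ih =>
    rw [SimpleGraph.fromRel_adj] at h
    simp only [SimpleGraph.Walk.length_cons] at hl
    obtain ⟨-, h | h⟩ := h
    · obtain ⟨h1, h2⟩ := h
      have := ih (by omega)
      rcases h2 with h2 | h2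
      · rw [h2]; exact this
      · exact Relation.ReflTransGen.head h2 this
    · obtain ⟨h1, -⟩ := h
      obtain ⟨hb1, hb2⟩ := walk_bound q
      omega

private lemma chain_walk {n : ℕ} {R : V → V → Prop} (hn : 1 ≤ n) :
    ∀ (l : List V) (x : V) (i : ℕ) (h : i + l.length ≤ n - 1),
      List.Chain (fun a b => a = b ∨ R a b) x l →
      ∃ p : (layG n R).Walk (x, ⟨i, by omega⟩)
          ((x :: l).getLast (List.cons_ne_nil _ _), ⟨i + l.length, by omega⟩),
        p.length = l.length := by
  intro l
  induction l with
  | nil =>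
    intro x i h _
    exact ⟨(SimpleGraph.Walk.nil).copy rfl (by simp), by simp⟩
  | cons y l ih =>
    intro x i h hc
    simp only [List.Chain, List.isChain_cons_cons] at hc
    obtain ⟨hxy, hc⟩ := hc
    simp only [List.length_cons] at h
    obtain ⟨q, hq⟩ := ih y (i + 1) (by omega) hc
    have hadj : (layG n R).Adj (x, ⟨i, by omega⟩) (y, ⟨i + 1, by omega⟩) := by
      rw [SimpleGraph.fromRel_adj]
      constructor
      · intro hcon
        have := congrArg (fun z => (z.2 : ℕ)) hcon
        simp at this
      · left
        exact ⟨rfl, hxy.imp id id⟩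
    refine ⟨(SimpleGraph.Walk.cons hadj q).copy rfl (Prod.ext ?_ ?_), (SimpleGraph.Walk.length_copy _ _ _).trans (by simp [hq])⟩
    · exact (List.getLast_cons (a := x) (List.cons_ne_nil y l)).symm
    · rw [Fin.mk_eq_mk]
      simp only [List.length_cons]
      omega

private lemma dup_decomp {x : V} : ∀ {l : List V}, List.Duplicate x l →
    ∃ m₁ m₂ m₃ : List V, l = m₁ ++ x :: (m₂ ++ x :: m₃) := by
  intro l h
  induction h with
  | @cons_mem l hm =>
    obtain ⟨m₂, m₃, rfl⟩ := List.append_of_mem hm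
    exact ⟨[], m₂, m₃, rfl⟩
  | @cons_duplicate y l _ ih =>
    obtain ⟨m₁, m₂, m₃, rfl⟩ := ih
    exact ⟨y :: m₁, m₂, m₃, rfl⟩

private lemma shorten {n : ℕ} {R' : V → V → Prop} (hcard : Fintype.card V = n) :
    ∀ (N : ℕ) (l : List V), l.length ≤ N → List.Chain' R' l →
      ∃ l' : List V, List.Chain' R' l' ∧ l'.head? = l.head? ∧
        l'.getLast? = l.getLast? ∧ l'.length ≤ n := by
  intro N
  induction N with
  | zero =>
    intro l hl hc
    exact ⟨l, hc, rfl, rfl, by omega⟩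
  | succ N ih =>
    intro l hl hc
    by_cases hsmall : l.length ≤ n
    · exact ⟨l, hc, rfl, rfl, hsmall⟩
    · have hnd : ¬ l.Nodup := fun h => hsmall (hcard ▸ h.length_le_card)
      obtain ⟨x, hx⟩ := List.exists_duplicate_iff_not_nodup.2 hnd
      obtain ⟨m₁, m₂, m₃, rfl⟩ := dup_decomp hx
      have hc1 : List.Chain' R' (m₁ ++ x :: m₃) := by
        simp only [List.Chain'] at hc ⊢
        rw [List.isChain_split] at hc ⊢
        refine ⟨hc.1, ?_⟩
        have := hc.2
        rw [show x :: (m₂ ++ x :: m₃) = (x :: m₂) ++ x :: m₃ by simp] at this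
        rw [List.isChain_split] at this
        exact this.2
      have hlen : (m₁ ++ x :: m₃).length ≤ N := by
        simp at hl ⊢; omega
      obtain ⟨l', h1, h2, h3, h4⟩ := ih _ hlen hc1
      refine ⟨l', h1, ?_, ?_, h4⟩
      · rw [h2]
        cases m₁ <;> simp
      · rw [h3, List.getLast?_append_cons,
          show x :: (m₂ ++ x :: m₃) = (x :: m₂) ++ x :: m₃ from by simp]
        rw [← List.append_assoc, List.getLast?_append_cons]

private lemma pad {R' : V → V → Prop} (hR' : ∀ a, R' a a) {s : V} :
    ∀ (k : ℕ) (l : List V), l.head? = some s → List.Chain' R' l →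
      List.Chain' R' (List.replicate k s ++ l) ∧
        (List.replicate k s ++ l).head? = some s ∧
        (List.replicate k s ++ l).getLast? = l.getLast? := by
  intro k
  induction k with
  | zero => intro l h hc; simpa using ⟨hc, h⟩
  | succ k ih =>
    intro l h hc
    obtain ⟨h1, h2, h3⟩ := ih l h hc
    rw [List.replicate_succ, List.cons_append]
    refine ⟨List.isChain_cons.2 ⟨?_, h1⟩, by simp, ?_⟩
    · intro b hb
      rw [h2] at hb
      cases hb
      exact hR' s
    · have hne : l ≠ [] := by rintro rfl; simp at h
      rw [show s :: (List.replicate k s ++ l) = List.replicate (k + 1) s ++ l from by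
          rw [List.replicate_succ, List.cons_append],
        List.getLast?_append_of_ne_nil _ hne]

end Aux

/-- Let `V` be a finite set with `|V| = n ≥ 1`, `R` a directed graph (binary
relation) on `V`, and `s t : V`. In the undirected layered graph on `V × Fin n`, where
`(x,i)` is adjacent to `(y,i+1)` iff `x = y` or `R x y`, there is a walk of length exactly
`n - 1` from `(s,0)` to `(t,n-1)` iff `t` is reachable from `s` in `R` (i.e. `(s,t)` is in
the reflexive-transitive closure of `R`). -/
theorem stmt_3 {V : Type} [Fintype V] (n : ℕ) (hn : 1 ≤ n)
    (hcard : Fintype.card V = n) (R : V → V → Prop) (s t : V) :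
    Relation.ReflTransGen R s t ↔
      ∃ p : (SimpleGraph.fromRel (fun x y : V × Fin n =>
            (x.2 : ℕ) + 1 = (y.2 : ℕ) ∧ (x.1 = y.1 ∨ R x.1 y.1))).Walk
          (s, ⟨0, by omega⟩) (t, ⟨n - 1, by omega⟩),
        p.length = n - 1 := by
  constructor
  · intro h
    have hR' : Relation.ReflTransGen (fun a b : V => a = b ∨ R a b) s t :=
      Relation.ReflTransGen.mono (p := fun a b : V => a = b ∨ R a b) (fun a b hab => Or.inr hab) s t h
    obtain ⟨l, hchain, hlast⟩ := List.exists_isChain_cons_of_relationReflTransGen hR'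
    have hchain' : List.Chain' (fun a b : V => a = b ∨ R a b) (s :: l) := hchain
    obtain ⟨l', h1, h2, h3, h4⟩ := shorten hcard (s :: l).length (s :: l) le_rfl hchain'
    rw [List.head?_cons] at h2
    rw [List.getLast?_eq_getLast (List.cons_ne_nil s l), hlast] at h3
    obtain ⟨hm1, hm2, hm3⟩ := pad (R' := fun a b : V => a = b ∨ R a b) (fun a => Or.inl rfl) (n - l'.length) l' h2 h1
    set m := List.replicate (n - l'.length) s ++ l' with hm
    have hmlen : m.length = n := by
      have : l' ≠ [] := by rintro rfl; simp at h2
      have : 1 ≤ l'.length := List.length_pos_iff.2 this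
      simp [hm, List.length_append]
      omega
    rcases hm4 : m with _ | ⟨a, rest⟩
    · rw [hm4] at hmlen; simp at hmlen; omega
    · rw [hm4] at hm1 hm2 hm3
      rw [List.head?_cons] at hm2
      obtain rfl : s = a := by injection hm2.symm
      have hrest : List.Chain (fun a b : V => a = b ∨ R a b) s rest := hm1
      have hrlen : rest.length = n - 1 := by
        rw [hm4] at hmlen; simp at hmlen; omega
      have hlast2 : (s :: rest).getLast (List.cons_ne_nil _ _) = t := by
        rw [List.getLast?_eq_getLast (List.cons_ne_nil s rest), h3] at hm3
        exact Option.some.inj hm3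
      obtain ⟨p, hp⟩ := chain_walk hn rest s 0 (by omega) hrest
      refine ⟨p.copy rfl (Prod.ext hlast2 ?_), by simp [hp, hrlen]⟩
      rw [Fin.mk_eq_mk]
      omega
  · rintro ⟨p, hp⟩
    exact walk_reach p (by simp [hp])
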